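/- For the constructed point W^p with rows W^p_j = exp_p(D_j/ρ) (p ∈ S arbitrary), every component of the similarity map satisfies S_i(W^p) = p. -/

import Mathlib

open Finset Real

/-- The open probability simplex in ℝ^c. -/
def simplexS (c : ℕ) : Set (Fin c → ℝ) := {p | (∀ i, 0 < p i) ∧ ∑ i, p i = 1}

/-- Tangent space: vectors with zero coordinate sum. -/
def T0 (c : ℕ) : Set (Fin c → ℝ) := {v | ∑ i, v i = 0}

/-- Orthogonal projection onto T0. -/
noncomputable def proj0 {c : ℕ} (u : Fin c → ℝ) : Fin c → ℝ :=
  fun i => u i - (∑ j, u j) / c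

/-- exp_p(v) = (p ⊙ e^v)/⟨p, e^v⟩. -/
noncomputable def expMap {c : ℕ} (p v : Fin c → ℝ) : Fin c → ℝ :=
  fun i => p i * Real.exp (v i) / ∑ j, p j * Real.exp (v j)

/-- Inverse of exp_p restricted to T0: exp_p⁻¹(q) = Π₀[log(q/p)]. -/
noncomputable def expInv {c : ℕ} (p q : Fin c → ℝ) : Fin c → ℝ :=
  proj0 (fun i => Real.log (q i / p i))

/-- R_q[u] = q ⊙ u − ⟨q,u⟩ q. -/
def Rmap {c : ℕ} (q u : Fin c → ℝ) : Fin c → ℝ :=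
  fun i => q i * u i - (∑ j, q j * u j) * q i

/-- Barycenter 𝟙ₛ = (1/c,…,1/c). -/
noncomputable def bary (c : ℕ) : Fin c → ℝ := fun _ => 1 / c

/-- The i-th component of the similarity map, in the form
S_i(W) = exp_{𝟙ₛ}( ∑_{j∈N_i} ω_{ij}(exp_{𝟙ₛ}⁻¹(W_j) − D_j/ρ) ). -/
noncomputable def Sim {n c : ℕ} (N : Fin n → Finset (Fin n)) (ω : Fin n → Fin n → ℝ)
    (D : Fin n → Fin c → ℝ) (ρ : ℝ) (W : Fin n → Fin c → ℝ) (i : Fin n) : Fin c → ℝ :=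
  expMap (bary c) (∑ j ∈ N i, ω i j • (expInv (bary c) (W j) - ρ⁻¹ • D j))

lemma key_expInv {c : ℕ} (hc : (c:ℝ) ≠ 0) (p : Fin c → ℝ) (hp : ∀ i, 0 < p i)
    (v : Fin c → ℝ) (k : Fin c) :
    expInv (bary c) (expMap p v) k - v k
      = Real.log (p k) - (∑ m, (Real.log (p m) + v m)) / c := by
  have hne : Nonempty (Fin c) := by
    have : c ≠ 0 := by exact_mod_cast hc
    exact Fin.pos_iff_nonempty.mp (Nat.pos_of_ne_zero this)
  have hZ : 0 < ∑ j, p j * Real.exp (v j) :=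
    Finset.sum_pos (fun j _ => mul_pos (hp j) (Real.exp_pos _)) Finset.univ_nonempty
  have hlog : ∀ m : Fin c, Real.log (expMap p v m / bary c m)
      = (Real.log (p m) + v m - Real.log (∑ j, p j * Real.exp (v j))) - Real.log (1/c) := by
    intro m
    have hq : expMap p v m ≠ 0 := by
      have : 0 < expMap p v m := div_pos (mul_pos (hp m) (Real.exp_pos _)) hZ
      exact this.ne'
    rw [show bary c m = 1/(c:ℝ) from rfl, Real.log_div hq (by simpa using hc)]
    congr 1
    rw [show expMap p v m = p m * Real.exp (v m) / ∑ j, p j * Real.exp (v j) from rfl,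
        Real.log_div (mul_pos (hp m) (Real.exp_pos _)).ne' hZ.ne',
        Real.log_mul (hp m).ne' (Real.exp_pos _).ne', Real.log_exp]
  simp only [expInv, proj0, hlog]
  rw [Finset.sum_sub_distrib, Finset.sum_sub_distrib, Finset.sum_add_distrib]
  simp only [Finset.sum_const, Finset.card_univ, Fintype.card_fin, nsmul_eq_mul]
  field_simp
  ring

theorem stmt14 {n c : ℕ} (N : Fin n → Finset (Fin n)) (ω : Fin n → Fin n → ℝ)
    (D : Fin n → Fin c → ℝ) (ρ : ℝ) (hρ : 0 < ρ)
    (hself : ∀ i, i ∈ N i)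
    (hωpos : ∀ i, ∀ j ∈ N i, 0 < ω i j)
    (hωsum : ∀ i, ∑ j ∈ N i, ω i j = 1)
    (p : Fin c → ℝ) (hp : p ∈ simplexS c) (i : Fin n) :
    Sim N ω D ρ (fun j => expMap p (ρ⁻¹ • D j)) i = p := by
  obtain ⟨hppos, hpsum⟩ := hp
  have hc : (c:ℝ) ≠ 0 := by
    rcases Nat.eq_zero_or_pos c with h | h
    · subst h; simp at hpsum
    · exact_mod_cast h.ne'
  set A := ∑ j ∈ N i, ω i j • (expInv (bary c) ((fun j => expMap p (ρ⁻¹ • D j)) j) - ρ⁻¹ • D j)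
    with hA
  set a : ℝ := ∑ j ∈ N i, ω i j * (-(∑ m, (Real.log (p m) + ρ⁻¹ * D j m)) / c) with ha
  have hAk : ∀ k, A k = Real.log (p k) + a := by
    intro k
    rw [hA]
    simp only [Finset.sum_apply, Pi.smul_apply, Pi.sub_apply, smul_eq_mul]
    have : ∀ j ∈ N i, ω i j * (expInv (bary c) (expMap p (ρ⁻¹ • D j)) k - ρ⁻¹ * D j k)
        = ω i j * Real.log (p k) + ω i j * (-(∑ m, (Real.log (p m) + ρ⁻¹ * D j m)) / c) := by
      intro j _
      have := key_expInv hc p hppos (ρ⁻¹ • D j) k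
      simp only [Pi.smul_apply, smul_eq_mul] at this
      rw [show expInv (bary c) (expMap p (ρ⁻¹ • D j)) k - ρ⁻¹ * D j k
            = Real.log (p k) - (∑ m, (Real.log (p m) + ρ⁻¹ * D j m)) / c from this]
      ring
    rw [Finset.sum_congr rfl this, Finset.sum_add_distrib, ← Finset.sum_mul, hωsum i, one_mul, ha]
  have hexpA : ∀ k, Real.exp (A k) = p k * Real.exp a := by
    intro k
    rw [hAk k, Real.exp_add, Real.exp_log (hppos k)]
  funext k
  show expMap (bary c) A k = p k
  simp only [expMap, bary, hexpA]
  rw [show (∑ j, 1/(c:ℝ) * (p j * Real.exp a)) = 1/(c:ℝ) * Real.exp a * ∑ j, p j by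
        rw [Finset.mul_sum]; exact Finset.sum_congr rfl (fun j _ => by ring), hpsum]
  have he : Real.exp a ≠ 0 := (Real.exp_pos _).ne'
  field_simp
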